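/- Suppose 𝕋ⁿ = ℝ^{m×n}, f is implementable and satisfies non-imposition. For ε ∈ ℝ and a ∈ A, let 1^a_ε denote the type profile whose column for a equals ε·𝟙 (the vector with every entry ε) and whose other columns are the zero vector. Then for every a ∈ A with a ∉ C^f(0) (0 the all-zero profile), there exists a unique κ(a) ∈ ℝ with κ(a) > 0 such that C^f(1^a_{κ(a)}) = C^f(0) ∪ {a}; moreover κ(a) = inf{ε ∈ ℝ, ε ≥ 0 : a ∈ C^f(1^a_ε)}. -/
import Mathlib
set_option linter.unusedSectionVars false
set_option maxHeartbeats 1000000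


open Function

/-- A type profile: column `t a` is the utility vector in `ℝⁿ` for alternative `a`;
agent `i`'s type (row) is `fun a => t a i`.  The domain is unrestricted: `𝕋ⁿ = ℝ^{m×n}`. -/
abbrev Profile (n : ℕ) (A : Type*) := A → Fin n → ℝ

/-- Payment rule `p` implements `f` in dominant strategies:
no agent `i` can gain by a unilateral deviation (a change of his own row only). -/
def Implements {n : ℕ} {A : Type*} (f : Profile n A → A)
    (p : Profile n A → Fin n → ℝ) : Prop :=
  ∀ t s : Profile n A, ∀ i : Fin n,
    (∀ j : Fin n, j ≠ i → ∀ a : A, s a j = t a j) →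
    t (f t) i + p t i ≥ t (f s) i + p s i

/-- `f` is implementable in dominant strategies. -/
def Implementable {n : ℕ} {A : Type*} (f : Profile n A → A) : Prop :=
  ∃ p, Implements f p

/-- The choice set `C^f(t)`: alternatives `a` such that raising the column of `a`
by any strictly positive `ε` makes `f` choose `a`. -/
def ChoiceSet {n : ℕ} {A : Type*} [DecidableEq A]
    (f : Profile n A → A) (t : Profile n A) : Set A :=
  {a | ∀ ε : Fin n → ℝ, (∀ i, 0 < ε i) →
    f (Function.update t a (t a + ε)) = a}

/-- `f` is neutral: permuting the columns of a profile permutes the choice set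
accordingly (the profile `s` induced by `ρ` has `s^{ρ a} = t^a`, i.e. `s b = t (ρ⁻¹ b)`). -/
def Neutral {n : ℕ} {A : Type*} [DecidableEq A] (f : Profile n A → A) : Prop :=
  ∀ t : Profile n A, ∀ ρ : Equiv.Perm A,
    ChoiceSet f (fun b => t (ρ.symm b)) = ρ '' ChoiceSet f t

/-- `f` satisfies non-imposition: every alternative is chosen at some profile. -/
def NonImposition {n : ℕ} {A : Type*} (f : Profile n A → A) : Prop :=
  ∀ a : A, ∃ t : Profile n A, f t = a

/-- The `P`-set of the pair `(a,b)`. -/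
def RPSet {n : ℕ} {A : Type*} [DecidableEq A] (f : Profile n A → A) (a b : A) :
    Set (Fin n → ℝ) :=
  {α | ∃ t : Profile n A, a ∈ ChoiceSet f t ∧ t a - t b = α}

/-- The profile `1^a_ε`: column `a` equals the constant vector `ε·𝟙`, all other columns are `0`. -/
def OneProf {n : ℕ} {A : Type*} [DecidableEq A] (a : A) (ε : ℝ) : Profile n A :=
  fun b => if b = a then (fun _ => ε) else 0

section Lemmas
variable {n : ℕ} {A : Type*} [Fintype A] [DecidableEq A]
  {f : Profile n A → A} {p : Profile n A → Fin n → ℝ}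

lemma wmon (hp : Implements f p) (u w : Profile n A) (i : Fin n)
    (h : ∀ j : Fin n, j ≠ i → ∀ c : A, u c j = w c j) :
    u (f u) i - u (f w) i ≥ w (f u) i - w (f w) i := by
  have h1 := hp u w i (fun j hj c => (h j hj c).symm)
  have h2 := hp w u i (fun j hj c => h j hj c)
  linarith

lemma chosen_of_strict (hp : Implements f p) {u w : Profile n A} {a : A}
    (hu : f u = a)
    (hlt : ∀ i : Fin n, ∀ c : A, c ≠ a → u a i - u c i < w a i - w c i) :
    f w = a := by
  classical
  have key : ∀ E : Finset (Fin n),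
      f (fun c i => if i ∈ E then w c i else u c i) = a := by
    intro E
    induction E using Finset.induction_on with
    | empty =>
        have : (fun c i => if i ∈ (∅ : Finset (Fin n)) then w c i else u c i) = u := by
          funext c i; simp
        rw [this, hu]
    | @insert i E hiE ih =>
        set uE : Profile n A := fun c j => if j ∈ E then w c j else u c j with huE
        set uI : Profile n A := fun c j => if j ∈ insert i E then w c j else u c j with huI
        have hagree : ∀ j : Fin n, j ≠ i → ∀ c : A, uE c j = uI c j := by
          intro j hj c
          simp only [huE, huI, Finset.mem_insert]
          by_cases hjE : j ∈ E <;> simp [hjE, hj]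
        have hmono := wmon hp uE uI i hagree
        rw [ih] at hmono
        by_contra hne
        have hlt' := hlt i (f uI) hne
        have h1 : uE a i = u a i := by simp [huE, hiE]
        have h2 : uE (f uI) i = u (f uI) i := by simp [huE, hiE]
        have h3 : uI a i = w a i := by simp [huI]
        have h4 : uI (f uI) i = w (f uI) i := by simp [huI]
        rw [h1, h2, h3, h4] at hmono
        linarith
  have := key Finset.univ
  have hw : (fun c i => if i ∈ (Finset.univ : Finset (Fin n)) then w c i else u c i) = w := by
    funext c i; simp
  rwa [hw] at this

lemma chosen_mem_choice (hp : Implements f p) {u : Profile n A} {a : A}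
    (hu : f u = a) : a ∈ ChoiceSet f u := by
  intro δ hδ
  apply chosen_of_strict hp hu
  intro i c hc
  simp only [Function.update_self, Function.update_of_ne hc, Pi.add_apply]
  have := hδ i; linarith

lemma l1 (hp : Implements f p) (hA2 : 2 ≤ Fintype.card A) {u w : Profile n A} {a : A}
    (hch : a ∈ ChoiceSet f u)
    (hlt : ∀ i : Fin n, ∀ c : A, c ≠ a → u a i - u c i < w a i - w c i) :
    f w = a := by
  classical
  have hne : (Finset.univ.erase a).Nonempty := by
    obtain ⟨c, hc⟩ := Fintype.exists_ne_of_one_lt_card (by omega) a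
    exact ⟨c, Finset.mem_erase.mpr ⟨hc, Finset.mem_univ c⟩⟩
  set ε : Fin n → ℝ := fun i =>
    ((Finset.univ.erase a).inf' hne
      (fun c => (w a i - w c i) - (u a i - u c i))) / 2 with hε
  have hεpos : ∀ i, 0 < ε i := by
    intro i
    have : 0 < (Finset.univ.erase a).inf'
        hne (fun c => (w a i - w c i) - (u a i - u c i)) := by
      rw [Finset.lt_inf'_iff]
      intro c hc
      have := hlt i c (Finset.mem_erase.mp hc).1
      linarith
    simp only [hε]; linarith
  have hstep := hch ε hεpos
  apply chosen_of_strict hp hstep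
  intro i c hc
  have hle : ((Finset.univ.erase a).inf' hne
      (fun c => (w a i - w c i) - (u a i - u c i)))
      ≤ (w a i - w c i) - (u a i - u c i) :=
    Finset.inf'_le _ (Finset.mem_erase.mpr ⟨hc, Finset.mem_univ c⟩)
  have hp1 := hεpos i
  simp only [Function.update_self, Function.update_of_ne hc, Pi.add_apply]
  simp only [hε] at hp1 ⊢
  linarith

lemma l2 (hp : Implements f p) (hA2 : 2 ≤ Fintype.card A) {u w : Profile n A} {a : A}
    (hch : a ∈ ChoiceSet f u)
    (hle : ∀ i : Fin n, ∀ c : A, c ≠ a → u a i - u c i ≤ w a i - w c i) :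
    a ∈ ChoiceSet f w := by
  intro δ hδ
  apply l1 hp hA2 hch
  intro i c hc
  have := hle i c hc
  have := hδ i
  simp only [Function.update_self, Function.update_of_ne hc, Pi.add_apply]
  linarith

end Lemmas

/-- for each `a ∉ C^f(0)` there is a unique `k > 0` with
`C^f(1^a_k) = C^f(0) ∪ {a}`; moreover `k = inf {ε ≥ 0 : a ∈ C^f(1^a_ε)}`. -/
theorem kappa_exists_unique
    {n : ℕ} {A : Type*} [Fintype A] [DecidableEq A]
    (hn : 0 < n) (hA : 3 ≤ Fintype.card A)
    (f : Profile n A → A)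
    (hf : Implementable f) (hni : NonImposition f)
    (a : A) (ha : a ∉ ChoiceSet f (0 : Profile n A)) :
    ∃ k : ℝ, (0 < k ∧
        ChoiceSet f (OneProf a k) = ChoiceSet f (0 : Profile n A) ∪ {a}) ∧
      (∀ k' : ℝ, 0 < k' →
        ChoiceSet f (OneProf a k') = ChoiceSet f (0 : Profile n A) ∪ {a} → k' = k) ∧
      k = sInf {ε : ℝ | 0 ≤ ε ∧ a ∈ ChoiceSet f (OneProf a ε)} := by
  classical
  obtain ⟨p, hp⟩ := hf
  have hA2 : 2 ≤ Fintype.card A := by omega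
  haveI : Nonempty (Fin n) := ⟨⟨0, hn⟩⟩
  set S : Set ℝ := {ε : ℝ | 0 ≤ ε ∧ a ∈ ChoiceSet f (OneProf a ε)} with hSdef
  set k : ℝ := sInf S with hkdef
  -- S is nonempty
  have hSne : S.Nonempty := by
    obtain ⟨t, ht⟩ := hni a
    set M : ℝ := 1 + ∑ i : Fin n, ∑ c : A, |t a i - t c i| with hM
    have hsum_nonneg : (0:ℝ) ≤ ∑ i : Fin n, ∑ c : A, |t a i - t c i| :=
      Finset.sum_nonneg fun i _ => Finset.sum_nonneg fun c _ => abs_nonneg _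
    have hM0 : (0:ℝ) ≤ M := by simp only [hM]; linarith
    refine ⟨M, hM0, l2 hp hA2 (chosen_mem_choice hp ht) ?_⟩
    intro i c hc
    have h1 : |t a i - t c i| ≤ ∑ c' : A, |t a i - t c' i| :=
      Finset.single_le_sum (f := fun c' => |t a i - t c' i|) (fun c' _ => abs_nonneg _) (Finset.mem_univ c)
    have h2 : ∑ c' : A, |t a i - t c' i| ≤ ∑ i' : Fin n, ∑ c' : A, |t a i' - t c' i'| :=
      Finset.single_le_sum (f := fun i' => ∑ c' : A, |t a i' - t c' i'|)
        (fun i' _ => Finset.sum_nonneg fun c' _ => abs_nonneg _) (Finset.mem_univ i)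
    have h3 : t a i - t c i ≤ |t a i - t c i| := le_abs_self _
    have h4 : OneProf (n := n) a M a i - OneProf (n := n) a M c i = M := by
      simp [OneProf, hc]
    rw [h4]; simp only [hM]; linarith
  have hbdd : BddBelow S := ⟨0, fun x hx => hx.1⟩
  -- S is upward closed
  have hup : ∀ ε ∈ S, ∀ ε' : ℝ, ε ≤ ε' → ε' ∈ S := by
    intro ε hε ε' hle
    refine ⟨le_trans hε.1 hle, l2 hp hA2 hε.2 ?_⟩
    intro i c hc
    simp [OneProf, hc, hle]
  have hmemS_gt : ∀ ε' : ℝ, k < ε' → ε' ∈ S := by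
    intro ε' hlt
    obtain ⟨x, hxS, hx⟩ := exists_lt_of_csInf_lt hSne hlt
    exact hup x hxS ε' hx.le
  -- k is positive
  have hkpos : 0 < k := by
    simp only [ChoiceSet, Set.mem_setOf_eq] at ha
    push_neg at ha
    obtain ⟨ε₀, hε₀pos, hε₀⟩ := ha
    set m₀ : ℝ := Finset.univ.inf' Finset.univ_nonempty (fun i : Fin n => ε₀ i) with hm₀def
    have hm₀pos : 0 < m₀ := by
      rw [hm₀def, Finset.lt_inf'_iff]; exact fun i _ => hε₀pos i
    have hlow : ∀ x ∈ S, m₀ ≤ x := by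
      intro x hx
      by_contra hcon
      push_neg at hcon
      have hδpos : ∀ i : Fin n, 0 < ε₀ i - x := by
        intro i
        have : m₀ ≤ ε₀ i := Finset.inf'_le _ (Finset.mem_univ i)
        linarith
      have := hx.2 (fun i => ε₀ i - x) hδpos
      have heq : Function.update (OneProf (n := n) a x) a
          ((OneProf (n := n) a x) a + fun i => ε₀ i - x)
          = Function.update (0 : Profile n A) a ((0 : Profile n A) a + ε₀) := by
        funext c i
        by_cases hca : c = a
        · subst hca
          simp [Function.update_self, OneProf]
        · simp [Function.update_of_ne hca, OneProf, hca]
      rw [heq] at this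
      exact hε₀ this
    have : m₀ ≤ k := le_csInf hSne hlow
    linarith
  have hknn : 0 ≤ k := hkpos.le
  -- a ∈ C^f(1^a_k)
  have hkS : a ∈ ChoiceSet f (OneProf a k) := by
    intro δ hδ
    set m : ℝ := Finset.univ.inf' Finset.univ_nonempty (fun i : Fin n => δ i) with hmdef
    have hmpos : 0 < m := by
      rw [hmdef, Finset.lt_inf'_iff]; exact fun i _ => hδ i
    have hk'' : (k + m / 2) ∈ S := hmemS_gt _ (by linarith)
    apply l1 hp hA2 hk''.2
    intro i c hc
    have hmle : m ≤ δ i := Finset.inf'_le _ (Finset.mem_univ i)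
    have h1 : OneProf (n := n) a (k + m/2) a i - OneProf (n := n) a (k + m/2) c i
        = k + m/2 := by simp [OneProf, hc]
    have h2 : Function.update (OneProf (n := n) a k) a ((OneProf (n := n) a k) a + δ) a i
        - Function.update (OneProf (n := n) a k) a ((OneProf (n := n) a k) a + δ) c i
        = k + δ i := by
      simp [Function.update_self, Function.update_of_ne hc, OneProf, hc]
    rw [h1, h2]; linarith

  -- (†): below k, alternatives of C^f(0) stay in the choice set
  have dagger : ∀ b ∈ ChoiceSet f (0 : Profile n A), ∀ ε : ℝ, 0 ≤ ε → ε < k →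
      b ∈ ChoiceSet f (OneProf a ε) := by
    intro b hb ε hε0 hεk δ hδ
    have hba : b ≠ a := fun h => ha (h ▸ hb)
    set w : Profile n A :=
      Function.update (OneProf a ε) b ((OneProf a ε) b + δ) with hwdef
    have hwa : ∀ i, w a i = ε := by
      intro i; simp [hwdef, Function.update_of_ne (Ne.symm hba), OneProf]
    have hwb : ∀ i, w b i = δ i := by
      intro i; simp [hwdef, Function.update_self, OneProf, hba]
    have hwc : ∀ c, c ≠ a → c ≠ b → ∀ i, w c i = 0 := by
      intro c hca hcb i
      simp [hwdef, Function.update_of_ne hcb, OneProf, hca]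
    show f w = b
    by_cases hdb : f w = b
    · exact hdb
    exfalso
    by_cases hda : f w = a
    · -- would put a in the choice set below k
      have haε : a ∈ ChoiceSet f (OneProf a ε) := by
        intro γ hγ
        apply chosen_of_strict hp hda
        intro i c hc
        have hgi := hγ i
        have h1 : Function.update (OneProf (n := n) a ε) a ((OneProf (n := n) a ε) a + γ) a i
            = ε + γ i := by simp [Function.update_self, OneProf]
        have h2 : Function.update (OneProf (n := n) a ε) a ((OneProf (n := n) a ε) a + γ) c i
            = 0 := by simp [Function.update_of_ne hc, OneProf, hc]
        rw [h1, h2, hwa i]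
        by_cases hcb : c = b
        · rw [hcb, hwb i]; have := hδ i; linarith
        · rw [hwc c hc hcb i]; linarith
      have : ε ∈ S := ⟨hε0, haε⟩
      have : k ≤ ε := csInf_le hbdd this
      linarith
    · -- f w = d ∉ {a, b} : contradiction with b ∈ C^f(0)
      set w2 : Profile n A := fun c => if c = b then (fun i => δ i / 2)
        else if c = f w then (fun i => δ i / 4) else 0 with hw2def
      have hw2b : ∀ i, w2 b i = δ i / 2 := by intro i; simp [hw2def]
      have hw2d : ∀ i, w2 (f w) i = δ i / 4 := by intro i; simp [hw2def, hdb]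
      have hw2c : ∀ c, c ≠ b → c ≠ f w → ∀ i, w2 c i = 0 := by
        intro c hcb hcd i; simp [hw2def, hcb, hcd]
      have h2d : f w2 = f w := by
        apply chosen_of_strict hp (rfl : f w = f w)
        intro i c hc
        have hdi := hδ i
        have hwdi : w (f w) i = 0 := hwc (f w) hda hdb i
        rw [hwdi, hw2d i]
        by_cases hca : c = a
        · have hab2 : a ≠ f w := fun h => hda h.symm
          rw [hca, hwa i, hw2c a (Ne.symm hba) hab2 i]; linarith
        · by_cases hcb : c = b
          · rw [hcb, hwb i, hw2b i]; linarith
          · rw [hwc c hca hcb i, hw2c c hcb hc i]; linarith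
      have h2b : f w2 = b := by
        apply l1 hp hA2 hb
        intro i c hc
        have hdi := hδ i
        simp only [Pi.zero_apply, sub_zero, sub_self]
        rw [hw2b i]
        by_cases hcd : c = f w
        · rw [hcd, hw2d i]; linarith
        · rw [hw2c c hc hcd i]; linarith
      exact hdb (h2d.symm.trans h2b)
  -- C^f(0) ⊆ C^f(1^a_k)
  have hsubset0 : ChoiceSet f (0 : Profile n A) ⊆ ChoiceSet f (OneProf a k) := by
    intro b hb
    have hba : b ≠ a := fun h => ha (h ▸ hb)
    intro δ hδ
    set m : ℝ := Finset.univ.inf' Finset.univ_nonempty (fun i : Fin n => δ i) with hmdef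
    have hmpos : 0 < m := by rw [hmdef, Finset.lt_inf'_iff]; exact fun i _ => hδ i
    set ε : ℝ := max (k - m / 2) 0 with hεdef
    have hε0 : 0 ≤ ε := le_max_right _ _
    have hεk : ε < k := max_lt (by linarith) hkpos
    have hεge : k - m / 2 ≤ ε := le_max_left _ _
    have hbε := dagger b hb ε hε0 hεk
    apply l1 hp hA2 hbε
    intro i c hc
    have hmle : m ≤ δ i := Finset.inf'_le _ (Finset.mem_univ i)
    set w : Profile n A :=
      Function.update (OneProf a k) b ((OneProf a k) b + δ) with hwdef
    have hub : OneProf (n := n) a ε b i = 0 := by simp [OneProf, hba]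
    have hwb : w b i = δ i := by
      simp [hwdef, Function.update_self, OneProf, hba]
    rw [hub, hwb]
    by_cases hca : c = a
    · have hua : OneProf (n := n) a ε a i = ε := by simp [OneProf]
      have hwa : w a i = k := by
        simp [hwdef, Function.update_of_ne (Ne.symm hba), OneProf]
      rw [hca, hua, hwa]; linarith
    · have huc : OneProf (n := n) a ε c i = 0 := by simp [OneProf, hca]
      have hwc : w c i = 0 := by
        simp [hwdef, Function.update_of_ne hc, OneProf, hca]
      rw [huc, hwc]; linarith
  -- C^f(1^a_k) ⊆ C^f(0) ∪ {a}
  have hsubset1 : ChoiceSet f (OneProf a k) ⊆ ChoiceSet f (0 : Profile n A) ∪ {a} := by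
    intro e he
    by_cases hea : e = a
    · right; exact hea
    · left
      intro γ hγ
      have hδpos : ∀ i, 0 < γ i / 2 := fun i => by have := hγ i; linarith
      have hwe := he (fun i => γ i / 2) hδpos
      apply chosen_of_strict hp hwe
      intro i c hc
      have hgi := hγ i
      set w : Profile n A :=
        Function.update (OneProf a k) e ((OneProf a k) e + fun i => γ i / 2) with hwdef
      set w4 : Profile n A :=
        Function.update (0 : Profile n A) e ((0 : Profile n A) e + γ) with hw4def
      have hwe' : w e i = γ i / 2 := by
        simp [hwdef, Function.update_self, OneProf, hea]
      have hw4e : w4 e i = γ i := by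
        simp [hw4def, Function.update_self]
      have hw4c : w4 c i = 0 := by
        simp [hw4def, Function.update_of_ne hc]
      rw [hwe', hw4e, hw4c]
      by_cases hca : c = a
      · have hwa : w a i = k := by
          simp [hwdef, Function.update_of_ne (Ne.symm (show e ≠ a from hea)), OneProf]
        rw [hca, hwa]; linarith
      · have hwc : w c i = 0 := by
          simp [hwdef, Function.update_of_ne hc, OneProf, hca]
        rw [hwc]; linarith
  refine ⟨k, ⟨hkpos, ?_⟩, ?_, rfl⟩
  · apply Set.Subset.antisymm hsubset1
    apply Set.union_subset hsubset0
    intro x hx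
    rw [Set.mem_singleton_iff] at hx
    rw [hx]; exact hkS
  · intro k' hk'pos hkeq
    have haS' : a ∈ ChoiceSet f (OneProf a k') := by
      rw [hkeq]; right; rfl
    have hk'S : k' ∈ S := ⟨hk'pos.le, haS'⟩
    have hkk' : k ≤ k' := csInf_le hbdd hk'S
    rcases eq_or_lt_of_le hkk' with h | h
    · exact h.symm
    exfalso
    have hb0 : f (0 : Profile n A) ∈ ChoiceSet f (0 : Profile n A) :=
      chosen_mem_choice hp rfl
    set b0 := f (0 : Profile n A) with hb0def
    have hb0a : b0 ≠ a := fun hh => ha (hh ▸ hb0)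
    have hb0' : b0 ∈ ChoiceSet f (OneProf a k') := by
      rw [hkeq]; left; exact hb0
    set k'' : ℝ := (k + k') / 2 with hk''def
    have hk''S : k'' ∈ S := hmemS_gt k'' (by rw [hk''def]; linarith)
    have hk''lt : k'' < k' := by rw [hk''def]; linarith
    have hw5 := hb0' (fun _ => (k' - k'') / 2) (fun i => by linarith)
    have hfa : f (Function.update (OneProf a k') b0
        ((OneProf a k') b0 + fun _ => (k' - k'') / 2)) = a := by
      apply l1 hp hA2 hk''S.2
      intro i c hc
      set w5 : Profile n A := Function.update (OneProf a k') b0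
        ((OneProf a k') b0 + fun _ => (k' - k'') / 2) with hw5def
      have hu : OneProf (n := n) a k'' a i - OneProf (n := n) a k'' c i = k'' := by
        simp [OneProf, hc]
      have hwa : w5 a i = k' := by
        simp [hw5def, Function.update_of_ne (Ne.symm hb0a), OneProf]
      rw [hu, hwa]
      by_cases hcb : c = b0
      · have hwb : w5 b0 i = (k' - k'') / 2 := by
          simp [hw5def, Function.update_self, OneProf, hb0a]
        rw [hcb, hwb]; linarith
      · have hwc : w5 c i = 0 := by
          simp [hw5def, Function.update_of_ne hcb, OneProf, hc]
        rw [hwc]; linarith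
    exact hb0a (hw5.symm.trans hfa)
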